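/- Let S be a nearly Gorenstein numerical semigroup with NG-vector (f_1,...,f_ν) and let f ∈ PF(S). If A = (a_{ij}) is an RF⁺ matrix for f and B = (b_{ij}) is an RF⁻ matrix for f (relative to the NG-vector), then a_{jk} · b_{kj} = 0 for all j ≠ k. -/

import Mathlib

/-- A numerical semigroup: a subset of ℕ containing 0, closed under addition,
with finite complement. -/
def IsNumSgp (S : Set ℕ) : Prop :=
  0 ∈ S ∧ (∀ a ∈ S, ∀ b ∈ S, a + b ∈ S) ∧ (Sᶜ : Set ℕ).Finite

/-- An integer belongs to (the image in ℤ of) S. -/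
def memZ (S : Set ℕ) (z : ℤ) : Prop := ∃ s ∈ S, (s : ℤ) = z

/-- F is the Frobenius number of S: the largest natural number not in S. -/
def IsFrob (S : Set ℕ) (F : ℕ) : Prop := F ∉ S ∧ ∀ n, F < n → n ∈ S

/-- The set of pseudo-Frobenius numbers of S. -/
def PF (S : Set ℕ) : Set ℕ := {f | f ∉ S ∧ ∀ s ∈ S, s ≠ 0 → f + s ∈ S}

/-- n is a minimal generator of S. -/
def IsMinGen (S : Set ℕ) (n : ℕ) : Prop :=
  n ∈ S ∧ n ≠ 0 ∧ ¬∃ a ∈ S, ∃ b ∈ S, a ≠ 0 ∧ b ≠ 0 ∧ a + b = n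

/-- S is almost symmetric (Nari): F - f ∈ PF(S) for every f ∈ PF(S). -/
def AlmostSym (S : Set ℕ) (F : ℕ) : Prop :=
  ∀ f ∈ PF S, ∃ g ∈ PF S, (g : ℤ) = (F : ℤ) - (f : ℤ)

/-- S is symmetric: PF(S) = {F(S)} (vacuously true when S = ℕ). -/
def IsSym (S : Set ℕ) : Prop := ∀ F, IsFrob S F → PF S = {F}

/-- (f_1,...,f_ν) is an NG-vector for S with minimal generators n_1,...,n_ν. -/
def IsNGVector {ν : ℕ} (S : Set ℕ) (n f : Fin ν → ℕ) : Prop :=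
  ∀ i, f i ∈ PF S ∧ ∀ g ∈ PF S, memZ S ((n i : ℤ) + (f i : ℤ) - (g : ℤ))

/-- S is nearly Gorenstein (generator criterion): for each minimal generator m
there is f ∈ PF(S) with m + f - g ∈ S for all g ∈ PF(S). -/
def NearlyGGen (S : Set ℕ) : Prop :=
  ∀ m, IsMinGen S m → ∃ f ∈ PF S, ∀ g ∈ PF S, memZ S ((m : ℤ) + (f : ℤ) - (g : ℤ))

/-- The canonical ideal K(S) = {z ∈ ℤ : F - z ∉ S}. -/
def Kan (S : Set ℕ) (F : ℕ) : Set ℤ := {z | ¬ memZ S ((F : ℤ) - z)}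

/-- The relative ideal (S - K(S)) = {z ∈ ℤ : z + K(S) ⊆ S}. -/
def SmK (S : Set ℕ) (F : ℕ) : Set ℤ := {z | ∀ k ∈ Kan S F, memZ S (z + k)}

/-- S is nearly Gorenstein: M(S) ⊆ K(S) + (S - K(S)). -/
def NearlyG (S : Set ℕ) (F : ℕ) : Prop :=
  ∀ m ∈ S, m ≠ 0 → ∃ k ∈ Kan S F, ∃ x ∈ SmK S F, k + x = (m : ℤ)


lemma mul_mem_S {S : Set ℕ} (hS : IsNumSgp S) {m : ℕ} (hm : m ∈ S) (c : ℕ) : c * m ∈ S := by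
  induction c with
  | zero => simpa using hS.1
  | succ d ih => simpa [Nat.succ_mul] using hS.2.1 _ ih _ hm

lemma sum_mem_S {S : Set ℕ} (hS : IsNumSgp S) {ι : Type*} [DecidableEq ι]
    (t : Finset ι) (g : ι → ℕ) (hg : ∀ i ∈ t, g i ∈ S) : (∑ i ∈ t, g i) ∈ S := by
  induction t using Finset.induction_on with
  | empty => simpa using hS.1
  | insert _ _ hnot ih =>
    rename_i a s
    rw [Finset.sum_insert hnot]
    exact hS.2.1 _ (hg a (Finset.mem_insert_self a s)) _
      (ih fun i hi => hg i (Finset.mem_insert_of_mem hi))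

theorem stmt5 (ν : ℕ) (S : Set ℕ) (F : ℕ) (n fv : Fin ν → ℕ) (f : ℕ)
    (hS : IsNumSgp S) (hF : IsFrob S F) (hmono : StrictMono n)
    (hgen : ∀ m, IsMinGen S m ↔ ∃ i, n i = m)
    (hNG : IsNGVector S n fv) (hf : f ∈ PF S)
    (A B : Fin ν → Fin ν → ℤ)
    (hA : ∀ i, A i i = -1 ∧ (∀ j, j ≠ i → 0 ≤ A i j) ∧
      (f : ℤ) = ∑ j, A i j * (n j : ℤ))
    (hB : ∀ i, (fv i = f → ∀ j, B i j = 0) ∧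
      (fv i ≠ f → B i i = -1 ∧ (∀ j, j ≠ i → 0 ≤ B i j) ∧
        (fv i : ℤ) - (f : ℤ) = ∑ j, B i j * (n j : ℤ))) :
    ∀ j k, j ≠ k → A j k * B k j = 0 := by
  intro j k hjk
  by_contra hne
  by_cases hfk : fv k = f
  · exact hne (by rw [(hB k).1 hfk j, mul_zero])
  obtain ⟨hBkk, hBpos, hBsum⟩ := (hB k).2 hfk
  obtain ⟨hAjj, hApos, hAsum⟩ := hA j
  have hAjk : 0 ≤ A j k := hApos k (Ne.symm hjk)
  have hBkj : 0 ≤ B k j := hBpos j hjk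
  have hA1 : 1 ≤ A j k := by
    rcases hAjk.lt_or_eq with h | h
    · exact h
    · exact absurd (by rw [← h, zero_mul]) hne
  have hB1 : 1 ≤ B k j := by
    rcases hBkj.lt_or_eq with h | h
    · exact h
    · exact absurd (by rw [← h, mul_zero]) hne
  have hc : ∀ i, 0 ≤ A j i + B k i := by
    intro i
    by_cases hij : i = j
    · subst hij; rw [hAjj]; linarith
    by_cases hik : i = k
    · subst hik; rw [hBkk]; linarith
    · exact add_nonneg (hApos i hij) (hBpos i hik)
  set c : Fin ν → ℕ := fun i => (A j i + B k i).toNat with hcdef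
  have hcast : ∀ i, (c i : ℤ) = A j i + B k i := fun i => Int.toNat_of_nonneg (hc i)
  have hsum : ((∑ i, c i * n i : ℕ) : ℤ) = (fv k : ℤ) := by
    push_cast
    calc ∑ i, (c i : ℤ) * (n i : ℤ) = ∑ i, (A j i + B k i) * (n i : ℤ) := by
          exact Finset.sum_congr rfl fun i _ => by rw [hcast]
      _ = (∑ i, A j i * (n i : ℤ)) + ∑ i, B k i * (n i : ℤ) := by
          rw [← Finset.sum_add_distrib]; exact Finset.sum_congr rfl fun i _ => by ring
      _ = (fv k : ℤ) := by rw [← hAsum, ← hBsum]; ring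
  have hmem : (∑ i, c i * n i) ∈ S := by
    apply sum_mem_S hS
    intro i _
    have hni : n i ∈ S := ((hgen (n i)).2 ⟨i, rfl⟩).1
    exact mul_mem_S hS hni (c i)
  have : fv k ∈ S := by
    have h2 : (∑ i, c i * n i) = fv k := Nat.cast_injective hsum
    rwa [h2] at hmem
  exact ((hNG k).1).1 this
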